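/- Let (X, μ) be a measure space, L ∈ ℕ, κ ≥ 1, and let q₀, q₁, …, q_L be measurable sets each of finite positive measure such that for every j ∈ {1,…,L} the overlap condition μ(q_j) ≤ κ · μ( q_j ∩ ⋃_{ℓ<j} q_ℓ ) holds (in particular μ(q_j ∩ ⋃_{ℓ<j} q_ℓ) > 0). Set q := ⋃_{ℓ=0}^{L} q_ℓ. Then every v ∈ L²(q) satisfies ‖v − ⟨v⟩_q‖²_{L²(q)} ≤ (1 + 2κ)^L ∑_{ℓ=0}^{L} ‖v − ⟨v⟩_{q_ℓ}‖²_{L²(q_ℓ)}. -/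

import Mathlib

open MeasureTheory Set

/-- The integral mean `⟨v⟩_A = μ(A)⁻¹ ∫_A v dμ`. -/
noncomputable def setMean {X : Type*} [MeasurableSpace X] (μ : Measure X)
    (A : Set X) (v : X → ℝ) : ℝ :=
  (μ A).toReal⁻¹ * ∫ x in A, v x ∂μ

section Aux

variable {X : Type*} [MeasurableSpace X] {μ : Measure X}

lemma aux_finiteMeasure {A : Set X} (hfin : μ A ≠ ⊤) : IsFiniteMeasure (μ.restrict A) := by
  constructor
  rw [Measure.restrict_apply_univ]
  exact hfin.lt_top

lemma aux_sq_integrable {A : Set X} (hfin : μ A ≠ ⊤)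
    {v : X → ℝ} (hv : MemLp v 2 (μ.restrict A)) (c : ℝ) :
    Integrable (fun x => (v x - c) ^ 2) (μ.restrict A) := by
  haveI := aux_finiteMeasure hfin
  exact (hv.sub (memLp_const c)).integrable_sq

/-- Bias-variance style expansion. -/
lemma aux_expand {A : Set X} (h0 : μ A ≠ 0) (hfin : μ A ≠ ⊤)
    {v : X → ℝ} (hv : MemLp v 2 (μ.restrict A)) (c : ℝ) :
    ∫ x in A, (v x - c) ^ 2 ∂μ
      = (∫ x in A, (v x - setMean μ A v) ^ 2 ∂μ)
        + (μ A).toReal * (setMean μ A v - c) ^ 2 := by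
  haveI := aux_finiteMeasure hfin
  set m := setMean μ A v with hm
  have htR : (μ A).toReal ≠ 0 := ENNReal.toReal_ne_zero.2 ⟨h0, hfin⟩
  have hvint : Integrable v (μ.restrict A) := hv.integrable one_le_two
  have hsq : Integrable (fun x => (v x - m) ^ 2) (μ.restrict A) := aux_sq_integrable hfin hv m
  have hlin : Integrable (fun x => (2 * (m - c)) * (v x - m)) (μ.restrict A) :=
    (hvint.sub (integrable_const m)).const_mul _
  have h1 : ∫ x in A, (v x - m) ∂μ = 0 := by
    rw [integral_sub hvint (integrable_const m), setIntegral_const, smul_eq_mul, measureReal_def, hm, setMean]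
    field_simp
    ring
  have key : (fun x => (v x - c) ^ 2)
      = fun x => (v x - m) ^ 2 + ((2 * (m - c)) * (v x - m) + (m - c) ^ 2) := by
    funext x; ring
  rw [key]
  have e1 : ∫ x in A, ((v x - m) ^ 2 + (2 * (m - c) * (v x - m) + (m - c) ^ 2)) ∂μ
      = (∫ x in A, (v x - m) ^ 2 ∂μ)
        + ∫ x in A, (2 * (m - c) * (v x - m) + (m - c) ^ 2) ∂μ :=
    integral_add hsq (hlin.add (integrable_const ((m - c) ^ 2)))
  have e2 : ∫ x in A, (2 * (m - c) * (v x - m) + (m - c) ^ 2) ∂μ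
      = (∫ x in A, 2 * (m - c) * (v x - m) ∂μ) + ∫ x in A, ((m - c) ^ 2 : ℝ) ∂μ :=
    integral_add hlin (integrable_const ((m - c) ^ 2))
  have e3 : ∫ x in A, 2 * (m - c) * (v x - m) ∂μ = 2 * (m - c) * ∫ x in A, (v x - m) ∂μ :=
    integral_const_mul _ _
  rw [e1, e2, e3, h1, setIntegral_const, smul_eq_mul, measureReal_def]
  ring

/-- The mean minimizes the mean square deviation. -/
lemma aux_min {A : Set X} (h0 : μ A ≠ 0) (hfin : μ A ≠ ⊤)
    {v : X → ℝ} (hv : MemLp v 2 (μ.restrict A)) (c : ℝ) :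
    ∫ x in A, (v x - setMean μ A v) ^ 2 ∂μ ≤ ∫ x in A, (v x - c) ^ 2 ∂μ := by
  rw [aux_expand h0 hfin hv c]
  have : 0 ≤ (μ A).toReal * (setMean μ A v - c) ^ 2 := by positivity
  linarith

lemma aux_setMean_sub_const {A : Set X} (h0 : μ A ≠ 0) (hfin : μ A ≠ ⊤)
    {v : X → ℝ} (hvint : Integrable v (μ.restrict A)) (c : ℝ) :
    setMean μ A (fun x => v x - c) = setMean μ A v - c := by
  haveI := aux_finiteMeasure hfin
  have htR : (μ A).toReal ≠ 0 := ENNReal.toReal_ne_zero.2 ⟨h0, hfin⟩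
  rw [setMean, setMean, integral_sub hvint (integrable_const c), setIntegral_const, smul_eq_mul, measureReal_def]
  field_simp

/-- Cauchy-Schwarz: square of mean is at most mean of square. -/
lemma aux_CS {S : Set X} (h0 : μ S ≠ 0) (hfin : μ S ≠ ⊤)
    {g : X → ℝ} (hg : MemLp g 2 (μ.restrict S)) :
    (setMean μ S g) ^ 2 ≤ (μ S).toReal⁻¹ * ∫ x in S, g x ^ 2 ∂μ := by
  have htR : 0 < (μ S).toReal := ENNReal.toReal_pos h0 hfin
  have h := aux_expand h0 hfin hg 0
  simp only [sub_zero] at h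
  have h2 : 0 ≤ ∫ x in S, (g x - setMean μ S g) ^ 2 ∂μ :=
    integral_nonneg fun x => sq_nonneg _
  rw [h, mul_add, inv_mul_cancel_left₀ htR.ne']
  have h3 := mul_nonneg (inv_nonneg.2 htR.le) h2
  linarith

/-- Two-set overlapping step. -/
lemma aux_step {A B : Set X} (hA : MeasurableSet A) (hB : MeasurableSet B)
    (hA0 : μ A ≠ 0) (hAfin : μ A ≠ ⊤) (hB0 : μ B ≠ 0) (hBfin : μ B ≠ ⊤)
    {κ : ℝ} (hκ : 1 ≤ κ) (hS0 : μ (A ∩ B) ≠ 0)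
    (hover : μ B ≤ ENNReal.ofReal κ * μ (A ∩ B))
    {v : X → ℝ} (hv : MemLp v 2 (μ.restrict (A ∪ B))) :
    (∫ x in A ∪ B, (v x - setMean μ (A ∪ B) v) ^ 2 ∂μ)
      ≤ (1 + 2 * κ) * ((∫ x in A, (v x - setMean μ A v) ^ 2 ∂μ)
          + (∫ x in B, (v x - setMean μ B v) ^ 2 ∂μ)) := by
  have hU0 : μ (A ∪ B) ≠ 0 := fun h => hA0 (measure_mono_null subset_union_left h)
  have hUfin : μ (A ∪ B) ≠ ⊤ :=
    ((measure_union_le A B).trans_lt (ENNReal.add_lt_top.2 ⟨hAfin.lt_top, hBfin.lt_top⟩)).ne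
  have hSfin : μ (A ∩ B) ≠ ⊤ :=
    ((measure_mono inter_subset_left).trans_lt hAfin.lt_top).ne
  have hSt : 0 < (μ (A ∩ B)).toReal := ENNReal.toReal_pos hS0 hSfin
  have hvA : MemLp v 2 (μ.restrict A) :=
    hv.mono_measure (Measure.restrict_mono subset_union_left le_rfl)
  have hvB : MemLp v 2 (μ.restrict B) :=
    hv.mono_measure (Measure.restrict_mono subset_union_right le_rfl)
  have hvS : MemLp v 2 (μ.restrict (A ∩ B)) :=
    hvA.mono_measure (Measure.restrict_mono inter_subset_left le_rfl)
  set mA := setMean μ A v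
  set mB := setMean μ B v
  set EA := ∫ x in A, (v x - mA) ^ 2 ∂μ with hEA
  set EB := ∫ x in B, (v x - mB) ^ 2 ∂μ with hEB
  have hEApos : 0 ≤ EA := integral_nonneg fun x => sq_nonneg _
  have hEBpos : 0 ≤ EB := integral_nonneg fun x => sq_nonneg _
  -- step 1: replace the mean on the union
  have step1 : (∫ x in A ∪ B, (v x - setMean μ (A ∪ B) v) ^ 2 ∂μ)
      ≤ ∫ x in A ∪ B, (v x - mA) ^ 2 ∂μ := aux_min hU0 hUfin hv mA
  -- step 2: subadditivity over the union
  have step2 : (∫ x in A ∪ B, (v x - mA) ^ 2 ∂μ)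
      ≤ EA + ∫ x in B, (v x - mA) ^ 2 ∂μ := by
    have hiA : IntegrableOn (fun x => (v x - mA) ^ 2) A μ := aux_sq_integrable hAfin hvA mA
    have hiB : IntegrableOn (fun x => (v x - mA) ^ 2) B μ := aux_sq_integrable hBfin hvB mA
    have hdisj : Disjoint A (B \ A) := disjoint_sdiff_self_right
    rw [← union_diff_self, setIntegral_union hdisj (hB.diff hA) hiA
      (hiB.mono_set diff_subset)]
    have : (∫ x in B \ A, (v x - mA) ^ 2 ∂μ) ≤ ∫ x in B, (v x - mA) ^ 2 ∂μ :=
      setIntegral_mono_set hiB (Filter.Eventually.of_forall fun x => sq_nonneg _)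
        (HasSubset.Subset.eventuallyLE diff_subset)
    linarith
  -- step 3: expand on B
  have step3 : (∫ x in B, (v x - mA) ^ 2 ∂μ)
      = EB + (μ B).toReal * (mB - mA) ^ 2 := aux_expand hB0 hBfin hvB mA
  -- step 4: estimate the mean difference via the overlap
  have hvintS : Integrable v (μ.restrict (A ∩ B)) := by
    haveI := aux_finiteMeasure hSfin
    exact hvS.integrable one_le_two
  have hma : setMean μ (A ∩ B) (fun x => v x - mA) = setMean μ (A ∩ B) v - mA :=
    aux_setMean_sub_const hS0 hSfin hvintS mA
  have hmb : setMean μ (A ∩ B) (fun x => v x - mB) = setMean μ (A ∩ B) v - mB :=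
    aux_setMean_sub_const hS0 hSfin hvintS mB
  have hCSa : (setMean μ (A ∩ B) v - mA) ^ 2
      ≤ (μ (A ∩ B)).toReal⁻¹ * ∫ x in A ∩ B, (v x - mA) ^ 2 ∂μ := by
    rw [← hma]; exact aux_CS hS0 hSfin (hvS.sub (haveI := aux_finiteMeasure hSfin; memLp_const mA))
  have hCSb : (setMean μ (A ∩ B) v - mB) ^ 2
      ≤ (μ (A ∩ B)).toReal⁻¹ * ∫ x in A ∩ B, (v x - mB) ^ 2 ∂μ := by
    rw [← hmb]; exact aux_CS hS0 hSfin (hvS.sub (haveI := aux_finiteMeasure hSfin; memLp_const mB))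
  have hmonA : (∫ x in A ∩ B, (v x - mA) ^ 2 ∂μ) ≤ EA :=
    setIntegral_mono_set (aux_sq_integrable hAfin hvA mA)
      (Filter.Eventually.of_forall fun x => sq_nonneg _)
      (HasSubset.Subset.eventuallyLE inter_subset_left)
  have hmonB : (∫ x in A ∩ B, (v x - mB) ^ 2 ∂μ) ≤ EB :=
    setIntegral_mono_set (aux_sq_integrable hBfin hvB mB)
      (Filter.Eventually.of_forall fun x => sq_nonneg _)
      (HasSubset.Subset.eventuallyLE inter_subset_right)
  have hdiff : (mB - mA) ^ 2 ≤ 2 * (μ (A ∩ B)).toReal⁻¹ * (EA + EB) := by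
    have h1 : (mB - mA) ^ 2
        ≤ 2 * (setMean μ (A ∩ B) v - mA) ^ 2 + 2 * (setMean μ (A ∩ B) v - mB) ^ 2 := by
      nlinarith [sq_nonneg (2 * setMean μ (A ∩ B) v - mA - mB)]
    have h2 : (μ (A ∩ B)).toReal⁻¹ * (∫ x in A ∩ B, (v x - mA) ^ 2 ∂μ)
        ≤ (μ (A ∩ B)).toReal⁻¹ * EA :=
      mul_le_mul_of_nonneg_left hmonA (by positivity)
    have h3 : (μ (A ∩ B)).toReal⁻¹ * (∫ x in A ∩ B, (v x - mB) ^ 2 ∂μ)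
        ≤ (μ (A ∩ B)).toReal⁻¹ * EB :=
      mul_le_mul_of_nonneg_left hmonB (by positivity)
    nlinarith
  -- step 5: the overlap condition in real numbers
  have hmeas : (μ B).toReal ≤ κ * (μ (A ∩ B)).toReal := by
    have h1 : (μ B).toReal ≤ (ENNReal.ofReal κ * μ (A ∩ B)).toReal :=
      ENNReal.toReal_mono (ENNReal.mul_ne_top ENNReal.ofReal_ne_top hSfin) hover
    rwa [ENNReal.toReal_mul, ENNReal.toReal_ofReal (by linarith)] at h1
  have step5 : (μ B).toReal * (mB - mA) ^ 2 ≤ 2 * κ * (EA + EB) := by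
    have h1 : (μ B).toReal * (mB - mA) ^ 2
        ≤ (κ * (μ (A ∩ B)).toReal) * (2 * (μ (A ∩ B)).toReal⁻¹ * (EA + EB)) := by
      apply mul_le_mul hmeas hdiff (sq_nonneg _)
      positivity
    have h2 : (κ * (μ (A ∩ B)).toReal) * (2 * (μ (A ∩ B)).toReal⁻¹ * (EA + EB))
        = 2 * κ * (EA + EB) := by
      field_simp
    linarith
  nlinarith

end Aux

/-- Chained patching estimate obtained by iterating the two-set overlapping
step in the proof of the generalized parabolic Poincaré inequality
(Lemma 4.4): for sets `q₀, …, q_L` of finite positive measure satisfying the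
overlap condition `μ(q_j) ≤ κ μ(q_j ∩ ⋃_{ℓ<j} q_ℓ)`, with `q = ⋃ q_ℓ`,
`‖v − ⟨v⟩_q‖²_{L²(q)} ≤ (1+2κ)^L ∑_ℓ ‖v − ⟨v⟩_{q_ℓ}‖²_{L²(q_ℓ)}`. -/
theorem stmt_5 {X : Type*} [MeasurableSpace X] (μ : Measure X)
    (L : ℕ) (κ : ℝ) (hκ : 1 ≤ κ)
    (q : ℕ → Set X) (hqMeas : ∀ ℓ ≤ L, MeasurableSet (q ℓ))
    (hq0 : ∀ ℓ ≤ L, 0 < μ (q ℓ)) (hqfin : ∀ ℓ ≤ L, μ (q ℓ) < ⊤)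
    (hover : ∀ j, 1 ≤ j → j ≤ L →
      μ (q j) ≤ ENNReal.ofReal κ * μ (q j ∩ ⋃ ℓ ∈ Finset.range j, q ℓ))
    (v : X → ℝ) (hv : MemLp v 2 (μ.restrict (⋃ ℓ ∈ Finset.range (L + 1), q ℓ))) :
    (∫ x in ⋃ ℓ ∈ Finset.range (L + 1), q ℓ,
        (v x - setMean μ (⋃ ℓ ∈ Finset.range (L + 1), q ℓ) v) ^ 2 ∂μ)
      ≤ (1 + 2 * κ) ^ L *
          ∑ ℓ ∈ Finset.range (L + 1),
            ∫ x in q ℓ, (v x - setMean μ (q ℓ) v) ^ 2 ∂μ := by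
  -- abbreviations
  set U : ℕ → Set X := fun j => ⋃ ℓ ∈ Finset.range (j + 1), q ℓ with hU
  have hUsub : ∀ j k, j ≤ k → U j ⊆ U k := by
    intro j k hjk x hx
    rw [hU] at hx ⊢
    simp only [Set.mem_iUnion, Finset.mem_range, exists_prop] at hx ⊢
    obtain ⟨ℓ, hℓ, hxℓ⟩ := hx
    exact ⟨ℓ, by omega, hxℓ⟩
  have hUmeas : ∀ j ≤ L, MeasurableSet (U j) := by
    intro j hj
    apply Finset.measurableSet_biUnion
    intro ℓ hℓ
    exact hqMeas ℓ (by simp at hℓ; omega)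
  have hU0 : ∀ j ≤ L, μ (U j) ≠ 0 := by
    intro j hj h
    refine (hq0 0 (Nat.zero_le _)).ne' (measure_mono_null ?_ h)
    exact Set.subset_biUnion_of_mem (Finset.mem_coe.2 (Finset.mem_range.2 (by omega)))
  have hUfin : ∀ j ≤ L, μ (U j) ≠ ⊤ := by
    intro j hj
    refine ((measure_biUnion_finset_le _ _).trans_lt (ENNReal.sum_lt_top.2 ?_)).ne
    intro ℓ hℓ
    exact hqfin ℓ (by simp at hℓ; omega)
  have hvU : ∀ j ≤ L, MemLp v 2 (μ.restrict (U j)) := by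
    intro j hj
    exact hv.mono_measure (Measure.restrict_mono (hUsub j L hj) le_rfl)
  -- main induction
  have main : ∀ j ≤ L,
      (∫ x in U j, (v x - setMean μ (U j) v) ^ 2 ∂μ)
        ≤ (1 + 2 * κ) ^ j *
            ∑ ℓ ∈ Finset.range (j + 1), ∫ x in q ℓ, (v x - setMean μ (q ℓ) v) ^ 2 ∂μ := by
    intro j
    induction j with
    | zero =>
      intro _
      have hU0eq : U 0 = q 0 := by simp [hU]
      simp [hU0eq]
    | succ j ih =>
      intro hjL
      have hjL' : j ≤ L := by omega
      have hsplit : U (j + 1) = U j ∪ q (j + 1) := by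
        rw [hU]
        simp only
        rw [Finset.range_add_one, Finset.set_biUnion_insert, union_comm]
      have hS0 : μ (U j ∩ q (j + 1)) ≠ 0 := by
        intro h
        have hov := hover (j + 1) (by omega) hjL
        rw [inter_comm] at h
        rw [show (⋃ ℓ ∈ Finset.range (j + 1), q ℓ) = U j from rfl, h, mul_zero] at hov
        exact (hq0 (j + 1) hjL).ne' (le_antisymm hov (zero_le))
      have hvUj : MemLp v 2 (μ.restrict (U (j + 1))) := hvU (j + 1) hjL
      rw [hsplit] at hvUj ⊢
      have hstep := aux_step (hUmeas j hjL') (hqMeas (j + 1) hjL)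
        (hU0 j hjL') (hUfin j hjL') (hq0 (j + 1) hjL).ne' (hqfin (j + 1) hjL).ne
        hκ hS0 (by rw [inter_comm]; exact hover (j + 1) (by omega) hjL) hvUj
      have hEq : 0 ≤ ∫ x in q (j + 1), (v x - setMean μ (q (j + 1)) v) ^ 2 ∂μ :=
        integral_nonneg fun x => sq_nonneg _
      have hCpos : (1 : ℝ) ≤ 1 + 2 * κ := by linarith
      have hCpow : (1 + 2 * κ) ≤ (1 + 2 * κ) ^ (j + 1) := by
        calc (1 + 2 * κ) = (1 + 2 * κ) ^ 1 := (pow_one _).symm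
        _ ≤ (1 + 2 * κ) ^ (j + 1) := pow_le_pow_right₀ (by linarith) (by omega)
      have hsum : ∑ ℓ ∈ Finset.range (j + 1 + 1), ∫ x in q ℓ, (v x - setMean μ (q ℓ) v) ^ 2 ∂μ
          = (∑ ℓ ∈ Finset.range (j + 1), ∫ x in q ℓ, (v x - setMean μ (q ℓ) v) ^ 2 ∂μ)
            + ∫ x in q (j + 1), (v x - setMean μ (q (j + 1)) v) ^ 2 ∂μ :=
        Finset.sum_range_succ _ _
      have hihj := ih hjL'
      have hSnn : 0 ≤ ∑ ℓ ∈ Finset.range (j + 1), ∫ x in q ℓ, (v x - setMean μ (q ℓ) v) ^ 2 ∂μ :=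
        Finset.sum_nonneg fun ℓ _ => integral_nonneg fun x => sq_nonneg _
      calc (∫ x in U j ∪ q (j + 1), (v x - setMean μ (U j ∪ q (j + 1)) v) ^ 2 ∂μ)
          ≤ (1 + 2 * κ) * ((∫ x in U j, (v x - setMean μ (U j) v) ^ 2 ∂μ)
              + ∫ x in q (j + 1), (v x - setMean μ (q (j + 1)) v) ^ 2 ∂μ) := hstep
        _ ≤ (1 + 2 * κ) ^ (j + 1) *
              ∑ ℓ ∈ Finset.range (j + 1 + 1), ∫ x in q ℓ, (v x - setMean μ (q ℓ) v) ^ 2 ∂μ := by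
            rw [hsum, pow_succ]
            have hP : (1:ℝ) ≤ (1 + 2 * κ) ^ j := one_le_pow₀ hCpos
            have hEU : 0 ≤ ∫ x in U j, (v x - setMean μ (U j) v) ^ 2 ∂μ :=
              integral_nonneg fun x => sq_nonneg _
            have t1 : (1 + 2 * κ) * (∫ x in U j, (v x - setMean μ (U j) v) ^ 2 ∂μ)
                ≤ (1 + 2 * κ) * ((1 + 2 * κ) ^ j *
                    ∑ ℓ ∈ Finset.range (j + 1),
                      ∫ x in q ℓ, (v x - setMean μ (q ℓ) v) ^ 2 ∂μ) :=
              mul_le_mul_of_nonneg_left hihj (by linarith)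
            have t2 : (1 + 2 * κ) * (∫ x in q (j + 1), (v x - setMean μ (q (j + 1)) v) ^ 2 ∂μ)
                ≤ (1 + 2 * κ) ^ j * (1 + 2 * κ) *
                    (∫ x in q (j + 1), (v x - setMean μ (q (j + 1)) v) ^ 2 ∂μ) := by
              have h := mul_le_mul_of_nonneg_right hP
                (mul_nonneg (by linarith : (0:ℝ) ≤ 1 + 2 * κ) hEq)
              nlinarith [h]
            nlinarith
  exact main L le_rfl
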